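/- For the unit simplex S₁ ⊆ ℝⁿ with barycenter p̄ = (1/(n+1),…,1/(n+1)), one has ∫_{S₁} ‖x − p̄‖² dx = n² / ((n+2)!·(n+1)). -/

import Mathlib

open MeasureTheory

def simT (n : ℕ) (s : ℝ) : Set (Fin n → ℝ) := {x | (∀ i, 0 ≤ x i) ∧ ∑ i, x i ≤ s}

lemma measurableSet_simT (n : ℕ) (s : ℝ) : MeasurableSet (simT n s) := by
  have : simT n s = (⋂ i, {x : Fin n → ℝ | 0 ≤ x i}) ∩ {x | ∑ i, x i ≤ s} := by
    ext x; simp [simT, forall_and]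
  rw [this]
  exact (MeasurableSet.iInter fun i =>
      measurableSet_le measurable_const (measurable_pi_apply i)).inter
    (measurableSet_le (Finset.measurable_sum _ fun i _ => measurable_pi_apply i) measurable_const)

lemma simT_empty {n : ℕ} {s : ℝ} (h : s < 0) : simT n s = ∅ := by
  ext x
  simp only [simT, Set.mem_setOf_eq, Set.mem_empty_iff_false, iff_false, not_and]
  intro hx hs
  have : (0:ℝ) ≤ ∑ i, x i := Finset.sum_nonneg fun i _ => hx i
  linarith

lemma vol_simT_neg {n : ℕ} {s : ℝ} (h : s < 0) : volume (simT n s) = 0 := by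
  rw [simT_empty h]; simp

lemma mem_simT_insertNth {n : ℕ} {s : ℝ} (i : Fin (n+1)) (t : ℝ) (y : Fin n → ℝ) :
    i.insertNth t y ∈ simT (n+1) s ↔ (0 ≤ t ∧ y ∈ simT n (s - t)) := by
  simp only [simT, Set.mem_setOf_eq]
  rw [Fin.sum_univ_succAbove _ i]
  simp only [Fin.insertNth_apply_same, Fin.insertNth_apply_succAbove]
  constructor
  · rintro ⟨h1, h2⟩
    have ht := h1 i
    rw [Fin.insertNth_apply_same] at ht
    refine ⟨ht, fun j => ?_, by linarith⟩
    have := h1 (i.succAbove j)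
    rwa [Fin.insertNth_apply_succAbove] at this
  · rintro ⟨h1, h2, h3⟩
    refine ⟨fun j => ?_, by linarith⟩
    rcases eq_or_ne j i with rfl | hne
    · simpa using h1
    · obtain ⟨j', rfl⟩ := Fin.exists_succAbove_eq hne
      simpa using h2 j'

lemma simplex_slice (n : ℕ) (s : ℝ) (i : Fin (n+1)) (g : ℝ → ENNReal) (hg : Measurable g) :
    ∫⁻ x in simT (n+1) s, g (x i) =
      ∫⁻ t, (if 0 ≤ t then g t else 0) * volume (simT n (s - t)) := by
  rw [← lintegral_indicator (measurableSet_simT _ _)]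
  have hmp := (volume_preserving_piFinSuccAbove (fun _ : Fin (n+1) => ℝ) i).symm
  have hF : Measurable ((simT (n+1) s).indicator (fun x => g (x i))) :=
    (Measurable.indicator (hg.comp (measurable_pi_apply i)) (measurableSet_simT _ _))
  calc ∫⁻ x, (simT (n+1) s).indicator (fun x => g (x i)) x ∂(volume : Measure (Fin (n+1) → ℝ))
      = ∫⁻ p, (simT (n+1) s).indicator (fun x => g (x i))
          ((MeasurableEquiv.piFinSuccAbove (fun _ : Fin (n+1) => ℝ) i).symm p)
          ∂(volume : Measure (ℝ × (Fin n → ℝ))) := by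
        rw [← hmp.lintegral_comp hF]
    _ = ∫⁻ t, ∫⁻ y, (simT (n+1) s).indicator (fun x => g (x i)) (i.insertNth t y) := by
        rw [Measure.volume_eq_prod, MeasureTheory.lintegral_prod
          (fun p : ℝ × (Fin n → ℝ) => (simT (n+1) s).indicator (fun x => g (x i))
            ((MeasurableEquiv.piFinSuccAbove (fun _ : Fin (n+1) => ℝ) i).symm p))
          ((hF.comp (MeasurableEquiv.measurable _)).aemeasurable)]
        rfl
    _ = ∫⁻ t, (if 0 ≤ t then g t else 0) * volume (simT n (s - t)) := by
        congr 1; ext t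
        have : ∀ y : Fin n → ℝ, (simT (n+1) s).indicator (fun x => g (x i)) (i.insertNth t y)
            = (simT n (s - t)).indicator (fun _ => if 0 ≤ t then g t else 0) y := by
          intro y
          by_cases hy : i.insertNth t y ∈ simT (n+1) s
          · rw [Set.indicator_of_mem hy]
            obtain ⟨ht, hy'⟩ := (mem_simT_insertNth i t y).1 hy
            rw [Set.indicator_of_mem hy', if_pos ht, Fin.insertNth_apply_same]
          · rw [Set.indicator_of_notMem hy]
            rw [mem_simT_insertNth] at hy
            push_neg at hy
            by_cases ht : 0 ≤ t
            · rw [Set.indicator_of_notMem (hy ht)]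
            · simp [if_neg ht]
        simp_rw [this]
        rw [lintegral_indicator (measurableSet_simT _ _), setLIntegral_const]

lemma vol_simT : ∀ (n : ℕ) (s : ℝ), 0 ≤ s →
    volume (simT n s) = ENNReal.ofReal (s ^ n / n.factorial)
  | 0, s, hs => by
      have : simT 0 s = Set.univ := by
        ext x; simp [simT, hs, Finset.sum_empty]
      rw [this]
      simp [volume_pi, Measure.pi_univ]
  | (n+1), s, hs => by
      have h1 : volume (simT (n+1) s) = ∫⁻ x in simT (n+1) s, (1 : ENNReal) :=
        (setLIntegral_one _).symm
      rw [h1, simplex_slice n s 0 (fun _ => 1) measurable_const]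
      have hpt : ∀ t : ℝ, (if 0 ≤ t then (1:ENNReal) else 0) * volume (simT n (s - t))
          = (Set.Icc (0:ℝ) s).indicator (fun t => ENNReal.ofReal ((s - t) ^ n / n.factorial)) t := by
        intro t
        by_cases ht : 0 ≤ t
        · by_cases hts : t ≤ s
          · rw [Set.indicator_of_mem (Set.mem_Icc.mpr ⟨ht, hts⟩), if_pos ht, one_mul,
              vol_simT n (s - t) (by linarith)]
          · rw [Set.indicator_of_notMem (by simp [hts]), if_pos ht, one_mul,
              vol_simT_neg (by linarith)]
        · rw [Set.indicator_of_notMem (by simp [ht]), if_neg ht, zero_mul]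
      simp_rw [hpt]
      rw [lintegral_indicator measurableSet_Icc]
      have hcont : Continuous (fun t : ℝ => (s - t) ^ n / n.factorial) := by continuity
      have hint : IntegrableOn (fun t : ℝ => (s - t) ^ n / n.factorial) (Set.Icc 0 s) volume :=
        hcont.integrableOn_Icc
      have hnn : 0 ≤ᵐ[volume.restrict (Set.Icc (0:ℝ) s)]
          (fun t : ℝ => (s - t) ^ n / n.factorial) := by
        filter_upwards [ae_restrict_mem measurableSet_Icc] with t ht
        have : (0:ℝ) ≤ (s - t) ^ n := pow_nonneg (by linarith [ht.2]) n
        positivity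
      rw [← ofReal_integral_eq_lintegral_ofReal hint hnn]
      congr 1
      rw [MeasureTheory.integral_Icc_eq_integral_Ioc, ← intervalIntegral.integral_of_le hs]
      have : ∫ t in (0:ℝ)..s, (s - t) ^ n / n.factorial
          = (∫ t in (0:ℝ)..s, (s - t) ^ n) / n.factorial := by
        rw [intervalIntegral.integral_div]
      rw [this, intervalIntegral.integral_comp_sub_left (fun x => x ^ n) s]
      simp only [sub_self, sub_zero, integral_pow]
      rw [Nat.factorial_succ]
      push_cast
      field_simp
      simp

lemma moment_simT (m : ℕ) (c : ℝ) (i : Fin (m+1)) :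
    ∫⁻ x in simT (m+1) 1, ENNReal.ofReal ((x i - c) ^ 2)
      = ENNReal.ofReal (∫ t in (0:ℝ)..1, (t - c) ^ 2 * ((1 - t) ^ m / m.factorial)) := by
  have hg : Measurable (fun t : ℝ => ENNReal.ofReal ((t - c) ^ 2)) :=
    ENNReal.measurable_ofReal.comp (by fun_prop)
  rw [simplex_slice m 1 i _ hg]
  have hpt : ∀ t : ℝ, (if 0 ≤ t then ENNReal.ofReal ((t - c) ^ 2) else 0)
        * volume (simT m (1 - t))
      = (Set.Icc (0:ℝ) 1).indicator
          (fun t => ENNReal.ofReal ((t - c) ^ 2 * ((1 - t) ^ m / m.factorial))) t := by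
    intro t
    by_cases ht : 0 ≤ t
    · by_cases hts : t ≤ 1
      · rw [Set.indicator_of_mem (Set.mem_Icc.mpr ⟨ht, hts⟩), if_pos ht,
          vol_simT m (1 - t) (by linarith), ← ENNReal.ofReal_mul (sq_nonneg _)]
      · rw [Set.indicator_of_notMem (by simp [hts]), if_pos ht,
          vol_simT_neg (by linarith), mul_zero]
    · rw [Set.indicator_of_notMem (by simp [ht]), if_neg ht, zero_mul]
  simp_rw [hpt]
  rw [lintegral_indicator measurableSet_Icc]
  have hcont : Continuous (fun t : ℝ => (t - c) ^ 2 * ((1 - t) ^ m / m.factorial)) := by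
    continuity
  have hint : IntegrableOn (fun t : ℝ => (t - c) ^ 2 * ((1 - t) ^ m / m.factorial))
      (Set.Icc 0 1) volume := hcont.integrableOn_Icc
  have hnn : 0 ≤ᵐ[volume.restrict (Set.Icc (0:ℝ) 1)]
      (fun t : ℝ => (t - c) ^ 2 * ((1 - t) ^ m / m.factorial)) := by
    filter_upwards [ae_restrict_mem measurableSet_Icc] with t ht
    have h1 : (0:ℝ) ≤ (t - c) ^ 2 := sq_nonneg _
    have h2 : (0:ℝ) ≤ (1 - t) ^ m := pow_nonneg (by linarith [ht.2]) m
    positivity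
  rw [← ofReal_integral_eq_lintegral_ofReal hint hnn]
  congr 1
  rw [MeasureTheory.integral_Icc_eq_integral_Ioc,
    ← intervalIntegral.integral_of_le (by norm_num : (0:ℝ) ≤ 1)]

lemma Rval (m : ℕ) (c : ℝ) :
    ∫ t in (0:ℝ)..1, (t - c) ^ 2 * ((1 - t) ^ m / m.factorial)
      = ((1-c)^2/(m+1) - 2*(1-c)/(m+2) + 1/(m+3)) / m.factorial := by
  have h0 : ∀ t : ℝ, (t - c) ^ 2 * ((1 - t) ^ m / m.factorial)
      = (fun u : ℝ => ((1-u)-c)^2 * u^m / m.factorial) (1 - t) := by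
    intro t; simp only; ring_nf
  simp_rw [h0]
  rw [intervalIntegral.integral_comp_sub_left (fun u : ℝ => ((1-u)-c)^2 * u^m / m.factorial) 1]
  simp only [sub_self, sub_zero]
  have h1 : ∀ u : ℝ, ((1-u)-c)^2 * u^m / m.factorial
      = ((1-c)^2 * u^m - 2*(1-c)*u^(m+1) + u^(m+2)) / m.factorial := by
    intro u; ring
  simp_rw [h1]
  rw [intervalIntegral.integral_div]
  congr 1
  rw [intervalIntegral.integral_add
      (((intervalIntegral.intervalIntegrable_pow m).const_mul _).sub
        ((intervalIntegral.intervalIntegrable_pow (m+1)).const_mul _))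
      (intervalIntegral.intervalIntegrable_pow (m+2)),
    intervalIntegral.integral_sub
      ((intervalIntegral.intervalIntegrable_pow m).const_mul _)
      ((intervalIntegral.intervalIntegrable_pow (m+1)).const_mul _),
    intervalIntegral.integral_const_mul, intervalIntegral.integral_const_mul,
    integral_pow, integral_pow, integral_pow]
  push_cast
  norm_num
  ring

theorem unit_simplex_second_moment {n : ℕ}
    (S1 : Set (EuclideanSpace ℝ (Fin n)))
    (hS1 : S1 = {x : EuclideanSpace ℝ (Fin n) | (∀ i, 0 ≤ x i) ∧ ∑ i, x i ≤ 1})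
    (pbar : EuclideanSpace ℝ (Fin n)) (hpbar : ∀ i, pbar i = ((n : ℝ) + 1)⁻¹) :
    ∫ x in S1, ‖x - pbar‖ ^ 2 =
      (n : ℝ) ^ 2 / ((Nat.factorial (n + 2) : ℝ) * ((n : ℝ) + 1)) := by
  obtain _ | m := n
  · have : ∀ x : EuclideanSpace ℝ (Fin 0), ‖x - pbar‖ ^ 2 = 0 := by
      intro x
      rw [Subsingleton.elim x pbar]
      simp
    simp [this]
  set c : ℝ := (((m + 1 : ℕ) : ℝ) + 1)⁻¹ with hc
  -- Step 1: rewrite the integrand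
  have hnorm : ∀ x : EuclideanSpace ℝ (Fin (m+1)), ‖x - pbar‖ ^ 2 = ∑ i, (x i - c) ^ 2 := by
    intro x
    rw [EuclideanSpace.norm_eq, Real.sq_sqrt (Finset.sum_nonneg fun i _ => sq_nonneg _)]
    congr 1
    ext i
    rw [Real.norm_eq_abs, sq_abs]
    congr 1
    simp [hpbar i]
  simp_rw [hnorm]
  -- measurability of coordinates
  have hmeas : ∀ i : Fin (m+1), Measurable (fun x : EuclideanSpace ℝ (Fin (m+1)) => x i) := fun i =>
    (measurable_pi_apply i).comp (MeasurableEquiv.toLp 2 (Fin (m+1) → ℝ)).symm.measurable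
  have hmeasf : ∀ i : Fin (m+1),
      Measurable (fun x : EuclideanSpace ℝ (Fin (m+1)) => ENNReal.ofReal ((x i - c) ^ 2)) := by
    intro i
    exact ENNReal.measurable_ofReal.comp (((hmeas i).sub measurable_const).pow_const 2)
  -- Step 2: to lintegral
  have hnn : 0 ≤ᵐ[volume.restrict S1]
      (fun x : EuclideanSpace ℝ (Fin (m+1)) => ∑ i, (x i - c) ^ 2) :=
    Filter.Eventually.of_forall fun x => Finset.sum_nonneg fun i _ => sq_nonneg _
  have hsm : AEStronglyMeasurable (fun x : EuclideanSpace ℝ (Fin (m+1)) => ∑ i, (x i - c) ^ 2)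
      (volume.restrict S1) := by
    apply Measurable.aestronglyMeasurable
    exact Finset.measurable_sum _ fun i _ => ((hmeas i).sub measurable_const).pow_const 2
  rw [MeasureTheory.integral_eq_lintegral_of_nonneg_ae hnn hsm]
  -- Step 3: split the sum
  have hsplit : ∫⁻ x in S1, ENNReal.ofReal (∑ i, (x i - c) ^ 2)
      = ∑ i : Fin (m+1), ∫⁻ x in S1, ENNReal.ofReal ((x i - c) ^ 2) := by
    rw [← MeasureTheory.lintegral_finset_sum _ fun i _ => hmeasf i]
    congr 1
    ext x
    rw [ENNReal.ofReal_sum_of_nonneg fun i _ => sq_nonneg _]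
  rw [hsplit]
  -- Step 4: transfer to the pi-type and evaluate
  set R : ℝ := ((1-c)^2/(m+1) - 2*(1-c)/(m+2) + 1/(m+3)) / m.factorial with hR
  have hcoord : ∀ i : Fin (m+1), ∫⁻ x in S1, ENNReal.ofReal ((x i - c) ^ 2)
      = ENNReal.ofReal R := by
    intro i
    have hpre : (MeasurableEquiv.toLp 2 (Fin (m+1) → ℝ)).symm ⁻¹' (simT (m+1) 1) = S1 := by
      rw [hS1]; rfl
    have := (EuclideanSpace.volume_preserving_symm_measurableEquiv_toLp (Fin (m+1))).setLIntegral_comp_preimage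
      (measurableSet_simT (m+1) 1)
      (f := fun y : Fin (m+1) → ℝ => ENNReal.ofReal ((y i - c) ^ 2))
      (ENNReal.measurable_ofReal.comp
        (((measurable_pi_apply i).sub measurable_const).pow_const 2))
    rw [hpre] at this
    calc ∫⁻ x in S1, ENNReal.ofReal ((x i - c) ^ 2)
        = ∫⁻ y in simT (m+1) 1, ENNReal.ofReal ((y i - c) ^ 2) := this
      _ = ENNReal.ofReal R := by rw [moment_simT m c i, Rval m c, hR]
  simp_rw [hcoord]
  -- Step 5: final arithmetic
  have hRnn : 0 ≤ R := by
    rw [hR, ← Rval m c]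
    apply intervalIntegral.integral_nonneg (by norm_num)
    intro t ht
    have h2 : (0:ℝ) ≤ (1 - t) ^ m := pow_nonneg (by linarith [ht.2]) m
    have h1 : (0:ℝ) ≤ (t - c) ^ 2 := sq_nonneg _
    positivity
  rw [Finset.sum_const, Finset.card_univ, Fintype.card_fin, nsmul_eq_mul,
    ENNReal.toReal_mul, ENNReal.toReal_ofReal hRnn]
  rw [ENNReal.toReal_natCast]
  rw [hR, hc]
  have hfac : ((m + 1 + 2).factorial : ℝ) = (m+3) * ((m+2) * ((m+1) * m.factorial)) := by
    push_cast [Nat.factorial_succ]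
    ring
  have hm : (0:ℝ) < m.factorial := by positivity
  rw [hfac]
  push_cast
  field_simp
  ring
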